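/- Let ξ_1, ξ_2, … be i.i.d. positive-integer valued random variables and fix n ∈ ℕ. Define R_0 = 0 and R_k = R_{k-1} + ξ_k·1{R_{k-1} + ξ_k < n}, and let M_n = ∑_{l=0}^∞ 1{R_l + ξ_{l+1} < n} be the number of jumps of (R_k). With N_n = inf{k ≥ 1 : S_k ≥ n} and S_k = ξ_1 + ⋯ + ξ_k, it holds pathwise that M_n = N_n - 1 + \widehat{M}, where \widehat{M} counts, starting from index N_n and level S_{N_n-1}, the jumps of the analogously truncated process at level n - S_{N_n-1}; moreover M_n - N_n + 1 equals in distribution M'_{n - S_{N_n-1}}, where (M'_k) is an independent copy of (M_k), independent of (N_n, n - S_{N_n-1}). -/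

import Mathlib

open MeasureTheory ProbabilityTheory

set_option linter.unusedSectionVars false
set_option linter.unusedVariables false

/-- The walk truncated to stay below level `m`:
`R_0 = 0`, `R_{k+1} = R_k + x_k·1{R_k + x_k < m}`. -/
def truncWalk (x : ℕ → ℕ) (m : ℕ) : ℕ → ℕ
  | 0 => 0
  | k + 1 => truncWalk x m k + if truncWalk x m k + x k < m then x k else 0

/-- The number of jumps of the truncated walk. -/
noncomputable def jumps (x : ℕ → ℕ) (m : ℕ) : ℕ :=
  {l : ℕ | truncWalk x m l ≠ truncWalk x m (l + 1)}.ncard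

def jumpSet (x : ℕ → ℕ) (m : ℕ) : Set ℕ :=
  {l : ℕ | truncWalk x m l ≠ truncWalk x m (l + 1)}

lemma jumps_eq (x : ℕ → ℕ) (m : ℕ) : jumps x m = (jumpSet x m).ncard := rfl

lemma truncWalk_le_succ (x : ℕ → ℕ) (m k : ℕ) :
    truncWalk x m k ≤ truncWalk x m (k + 1) := by
  show truncWalk x m k ≤ truncWalk x m k + _
  exact Nat.le_add_right _ _

lemma truncWalk_mono (x : ℕ → ℕ) (m : ℕ) : Monotone (truncWalk x m) :=
  monotone_nat_of_le_succ (truncWalk_le_succ x m)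

lemma truncWalk_succ_lt_of_mem {x : ℕ → ℕ} {m l : ℕ} (hl : l ∈ jumpSet x m) :
    truncWalk x m (l + 1) < m := by
  have : truncWalk x m (l + 1) = truncWalk x m l + if truncWalk x m l + x l < m then x l else 0 :=
    rfl
  by_cases h : truncWalk x m l + x l < m
  · rw [this, if_pos h]; exact h
  · exfalso; apply hl; rw [this, if_neg h, add_zero]

lemma jumpSet_finite (x : ℕ → ℕ) (m : ℕ) : (jumpSet x m).Finite := by
  have hinj : Set.InjOn (fun l => truncWalk x m (l + 1)) (jumpSet x m) := by
    have key : ∀ l₁ ∈ jumpSet x m, ∀ l₂ ∈ jumpSet x m, l₁ < l₂ →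
        truncWalk x m (l₁ + 1) < truncWalk x m (l₂ + 1) := by
      intro l₁ _ l₂ h₂ hlt
      have h1 : truncWalk x m (l₁ + 1) ≤ truncWalk x m l₂ := truncWalk_mono x m hlt
      have h2 : truncWalk x m l₂ < truncWalk x m (l₂ + 1) :=
        lt_of_le_of_ne (truncWalk_le_succ x m l₂) h₂
      omega
    intro l₁ h₁ l₂ h₂ heq
    rcases lt_trichotomy l₁ l₂ with h | h | h
    · exact absurd heq (ne_of_lt (key l₁ h₁ l₂ h₂ h))
    · exact h
    · exact absurd heq.symm (ne_of_lt (key l₂ h₂ l₁ h₁ h))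
  apply Set.Finite.of_finite_image _ hinj
  exact (Set.finite_Iio m).subset (by rintro _ ⟨l, hl, rfl⟩; exact truncWalk_succ_lt_of_mem hl)

lemma jumps_decomp (x : ℕ → ℕ) (hx : ∀ k, 1 ≤ x k) (n N : ℕ) (hN1 : 1 ≤ N)
    (hlt : ∀ k < N, (∑ i ∈ Finset.range k, x i) < n)
    (hge : n ≤ ∑ i ∈ Finset.range N, x i) :
    jumps x n = (N - 1) +
      jumps (fun k => x (N + k)) (n - ∑ i ∈ Finset.range (N - 1), x i) := by
  set s := ∑ i ∈ Finset.range (N - 1), x i with hs_def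
  have hs : s < n := hlt (N - 1) (by omega)
  have hN' : N - 1 + 1 = N := by omega
  have hsx : s + x (N - 1) = ∑ i ∈ Finset.range N, x i := by
    rw [hs_def, ← Finset.sum_range_succ, hN']
  -- (a)
  have haux : ∀ k, k ≤ N - 1 → truncWalk x n k = ∑ i ∈ Finset.range k, x i := by
    intro k
    induction k with
    | zero => intro _; simp [truncWalk]
    | succ k ih =>
      intro hk
      have h1 := ih (by omega)
      have h2 : (∑ i ∈ Finset.range (k + 1), x i) < n := hlt (k + 1) (by omega)
      show truncWalk x n k + _ = _
      rw [h1, Finset.sum_range_succ] at *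
      rw [if_pos h2]
  -- (b)
  have hb : truncWalk x n N = s := by
    have hN' : N = (N - 1) + 1 := by omega
    rw [hN']
    show truncWalk x n (N - 1) + _ = s
    rw [haux (N - 1) le_rfl, ← hs_def, if_neg (by omega), add_zero]
  -- (c)
  have hc : ∀ k, truncWalk x n (N + k)
      = s + truncWalk (fun j => x (N + j)) (n - s) k := by
    intro k
    induction k with
    | zero => simpa [truncWalk] using hb
    | succ k ih =>
      show truncWalk x n (N + k) +
          (if truncWalk x n (N + k) + x (N + k) < n then x (N + k) else 0)
        = s + (truncWalk (fun j => x (N + j)) (n - s) k +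
          (if truncWalk (fun j => x (N + j)) (n - s) k + x (N + k) < n - s
            then x (N + k) else 0))
      rw [ih]
      by_cases h : truncWalk (fun j => x (N + j)) (n - s) k + x (N + k) < n - s
      · rw [if_pos (by omega), if_pos h]; omega
      · rw [if_neg (by omega), if_neg h]; omega
  -- (d)
  have hd : jumpSet x n = Set.Iio (N - 1) ∪
      ((fun k => N + k) '' jumpSet (fun j => x (N + j)) (n - s)) := by
    ext l
    simp only [Set.mem_union, Set.mem_Iio, Set.mem_image]
    rcases lt_trichotomy l (N - 1) with h | h | h
    · constructor
      · intro _; exact Or.inl h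
      · intro _
        show truncWalk x n l ≠ truncWalk x n (l + 1)
        rw [haux l (by omega), haux (l + 1) (by omega), Finset.sum_range_succ]
        have := hx l
        omega
    · subst h
      constructor
      · intro hl
        exfalso
        apply hl
        show truncWalk x n (N - 1) = truncWalk x n ((N - 1) + 1)
        rw [haux (N - 1) le_rfl, ← hs_def, hN', hb]
      · rintro (h | ⟨k, _, hk⟩)
        · omega
        · have hk' : N + k = N - 1 := hk
          omega
    · have h1 : truncWalk x n l = s + truncWalk (fun j => x (N + j)) (n - s) (l - N) := by
        conv_lhs => rw [show l = N + (l - N) by omega]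
        exact hc _
      have h2 : truncWalk x n (l + 1)
          = s + truncWalk (fun j => x (N + j)) (n - s) (l - N + 1) := by
        conv_lhs => rw [show l + 1 = N + (l - N + 1) by omega]
        exact hc _
      constructor
      · intro hl
        refine Or.inr ⟨l - N, ?_, by show N + (l - N) = l; omega⟩
        show truncWalk (fun j => x (N + j)) (n - s) (l - N)
          ≠ truncWalk (fun j => x (N + j)) (n - s) (l - N + 1)
        intro heq
        apply hl
        show truncWalk x n l = truncWalk x n (l + 1)
        rw [h1, h2, heq]
      · rintro (hcon | ⟨k, hk, hkl⟩)
        · omega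
        · have hkl' : N + k = l := hkl
          have hkN : k = l - N := by omega
          subst hkN
          show truncWalk x n l ≠ truncWalk x n (l + 1)
          rw [h1, h2]
          intro heq
          exact hk (by omega)
  -- (e)
  rw [jumps_eq, jumps_eq, hd,
    Set.ncard_union_eq ?_ (Set.finite_Iio _)
      ((jumpSet_finite _ _).image _),
    Set.ncard_image_of_injective _ (add_right_injective N)]
  · congr 1
    rw [← Finset.coe_range, Set.ncard_coe_finset, Finset.card_range]
  · rw [Set.disjoint_left]
    rintro a ha ⟨k, _, rfl⟩
    simp only [Set.mem_Iio] at ha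
    omega



lemma measurable_truncWalk (m k : ℕ) : Measurable (fun x : ℕ → ℕ => truncWalk x m k) := by
  induction k with
  | zero => exact measurable_const
  | succ k ih =>
    have hx : Measurable fun x : ℕ → ℕ => x k := measurable_pi_apply k
    exact ih.add <| Measurable.ite
      ((ih.add hx) (MeasurableSet.of_discrete (s := Set.Iio m))) hx measurable_const

lemma measurable_jumps (r : ℕ) : Measurable (fun x : ℕ → ℕ => jumps x r) := by
  set F : ℕ → (ℕ → ℕ) → ℕ := fun K x =>
    ((Finset.range K).filter
      (fun l => truncWalk x r l ≠ truncWalk x r (l + 1))).card with hF_def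
  have hF : ∀ K x, F K x = ((jumpSet x r) ∩ Set.Iio K).ncard := by
    intro K x
    rw [hF_def]
    have : ((Finset.range K).filter
        (fun l => truncWalk x r l ≠ truncWalk x r (l + 1)) : Set ℕ)
        = (jumpSet x r) ∩ Set.Iio K := by
      ext l
      simp only [Finset.coe_filter, Finset.mem_range, Set.mem_setOf_eq, Set.mem_inter_iff,
        Set.mem_Iio, jumpSet]
      tauto
    show ((Finset.range K).filter (fun l => truncWalk x r l ≠ truncWalk x r (l + 1))).card = _
    rw [← this, Set.ncard_coe_finset]
  have hFle : ∀ K x, F K x ≤ jumps x r := by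
    intro K x
    rw [hF K x, jumps_eq]
    exact Set.ncard_le_ncard Set.inter_subset_left (jumpSet_finite x r)
  have hFex : ∀ x, ∃ K, F K x = jumps x r := by
    intro x
    obtain ⟨b, hb⟩ := (jumpSet_finite x r).bddAbove
    refine ⟨b + 1, ?_⟩
    rw [hF, jumps_eq, Set.inter_eq_self_of_subset_left]
    intro l hl
    exact lt_of_le_of_lt (hb hl) (Nat.lt_succ_self b)
  have hFmeas : ∀ K, Measurable (F K) := by
    intro K
    rw [hF_def]
    simp only [Finset.card_filter]
    apply Finset.measurable_sum
    intro l _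
    exact Measurable.ite
      ((measurableSet_eq_fun (measurable_truncWalk r l)
        (measurable_truncWalk r (l + 1))).compl) measurable_const measurable_const
  apply measurable_to_countable'
  intro j
  have : ((fun x : ℕ → ℕ => jumps x r) ⁻¹' {j})
      = (⋃ K, {x | F K x = j}) ∩ ⋂ K, {x | F K x ≤ j} := by
    ext x
    simp only [Set.mem_preimage, Set.mem_singleton_iff, Set.mem_setOf_eq, Set.mem_inter_iff,
      Set.mem_iUnion, Set.mem_iInter]
    constructor
    · rintro rfl
      exact ⟨hFex x, fun K => hFle K x⟩
    · rintro ⟨⟨K, hK⟩, h2⟩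
      obtain ⟨K', hK'⟩ := hFex x
      have h3 := h2 K'
      have h4 := hFle K x
      omega
  rw [this]
  exact MeasurableSet.inter
    (MeasurableSet.iUnion fun K => (hFmeas K) (MeasurableSet.of_discrete (s := {j})))
    (MeasurableSet.iInter fun K => (hFmeas K) (MeasurableSet.of_discrete (s := Set.Iic j)))

/-- The random walk `S_k = ξ_1 + ⋯ + ξ_k`. -/
def Swalk {Ω : Type*} (ξ : ℕ → Ω → ℕ) (k : ℕ) (ω : Ω) : ℕ :=
  ∑ i ∈ Finset.range k, ξ i ω

/-- The first passage time `N_n = inf{k ≥ 1 : S_k ≥ n}`. -/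
noncomputable def FPT {Ω : Type*} (ξ : ℕ → Ω → ℕ) (n : ℕ) (ω : Ω) : ℕ :=
  sInf {k : ℕ | 1 ≤ k ∧ n ≤ Swalk ξ k ω}

section SectA

variable {Ω : Type*} [MeasurableSpace Ω] (ξ : ℕ → Ω → ℕ) (n : ℕ)

lemma measurable_Swalk (hmeas : ∀ i, Measurable (ξ i)) (k : ℕ) : Measurable (Swalk ξ k) :=
  Finset.measurable_sum _ (fun i _ => hmeas i)

lemma fpt_mem (hpos : ∀ i ω, 1 ≤ ξ i ω) (hn : 1 ≤ n) (ω : Ω) :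
    1 ≤ FPT ξ n ω ∧ n ≤ Swalk ξ (FPT ξ n ω) ω := by
  have hmem : n ∈ {k : ℕ | 1 ≤ k ∧ n ≤ Swalk ξ k ω} := by
    refine ⟨hn, ?_⟩
    calc n = ∑ _i ∈ Finset.range n, 1 := by simp
    _ ≤ Swalk ξ n ω := Finset.sum_le_sum (fun i _ => hpos i ω)
  exact Nat.sInf_mem ⟨n, hmem⟩

lemma fpt_eq_iff (hpos : ∀ i ω, 1 ≤ ξ i ω) (hn : 1 ≤ n) (ω : Ω) (m : ℕ) :
    FPT ξ n ω = m ↔ 1 ≤ m ∧ n ≤ Swalk ξ m ω ∧ ∀ k < m, Swalk ξ k ω < n := by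
  obtain ⟨h1, h2⟩ := fpt_mem ξ n hpos hn ω
  constructor
  · rintro rfl
    refine ⟨h1, h2, fun k hk => ?_⟩
    have hnot := Nat.notMem_of_lt_sInf (s := {k : ℕ | 1 ≤ k ∧ n ≤ Swalk ξ k ω}) hk
    simp only [Set.mem_setOf_eq, not_and, not_le] at hnot
    rcases Nat.eq_zero_or_pos k with rfl | hk1
    · simpa [Swalk] using Nat.lt_of_succ_le hn
    · exact hnot hk1
  · rintro ⟨hm1, hm2, hm3⟩
    refine le_antisymm (Nat.sInf_le ⟨hm1, hm2⟩) ?_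
    by_contra hcon
    push_neg at hcon
    have hmem := fpt_mem ξ n hpos hn ω
    have := hm3 _ hcon
    omega

lemma measurable_FPT (hmeas : ∀ i, Measurable (ξ i)) (hpos : ∀ i ω, 1 ≤ ξ i ω) (hn : 1 ≤ n) :
    Measurable (FPT ξ n) := by
  apply measurable_to_countable'
  intro m
  have : (FPT ξ n ⁻¹' {m})
      = {ω | 1 ≤ m} ∩ ({ω | n ≤ Swalk ξ m ω} ∩ ⋂ k ∈ Set.Iio m, {ω | Swalk ξ k ω < n}) := by
    ext ω
    simp only [Set.mem_preimage, Set.mem_singleton_iff, Set.mem_setOf_eq, Set.mem_inter_iff,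
      Set.mem_iInter, Set.mem_Iio, fpt_eq_iff ξ n hpos hn ω m]
  rw [this]
  refine (MeasurableSet.const _).inter (MeasurableSet.inter ?_ ?_)
  · exact measurable_Swalk ξ hmeas m (MeasurableSet.of_discrete (s := Set.Ici n))
  · exact MeasurableSet.biInter (Set.to_countable _)
      (fun k _ => measurable_Swalk ξ hmeas k (MeasurableSet.of_discrete (s := Set.Iio n)))


end SectA

/-- Cylinder sets with singleton constraints. -/
def cylSet : Set (Set (ℕ → ℕ)) :=
  {A | ∃ (I : Finset ℕ) (c : ℕ → ℕ), A = {x | ∀ i ∈ I, x i = c i}}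

lemma isPiSystem_cylSet : IsPiSystem cylSet := by
  rintro A1 ⟨I1, c1, rfl⟩ A2 ⟨I2, c2, rfl⟩ hne
  obtain ⟨y, hy1, hy2⟩ := hne
  refine ⟨I1 ∪ I2, fun i => if i ∈ I1 then c1 i else c2 i, ?_⟩
  ext x
  simp only [Set.mem_inter_iff, Set.mem_setOf_eq, Finset.mem_union]
  constructor
  · rintro ⟨h1, h2⟩ i hi
    by_cases hI : i ∈ I1
    · rw [if_pos hI]; exact h1 i hI
    · rw [if_neg hI]; exact h2 i (hi.resolve_left hI)
  · intro h
    constructor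
    · intro i hi
      have := h i (Or.inl hi)
      rwa [if_pos hi] at this
    · intro i hi
      have := h i (Or.inr hi)
      by_cases hI : i ∈ I1
      · rw [if_pos hI] at this
        rw [this, ← hy1 i hI, hy2 i hi]
      · rwa [if_neg hI] at this
  
lemma generateFrom_cylSet :
    (inferInstance : MeasurableSpace (ℕ → ℕ)) = MeasurableSpace.generateFrom cylSet := by
  apply le_antisymm
  · rw [show (inferInstance : MeasurableSpace (ℕ → ℕ)) = MeasurableSpace.pi from rfl,
      MeasurableSpace.pi]
    apply iSup_le
    intro i
    intro t ht
    obtain ⟨s, _, rfl⟩ := ht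
    have : (fun x : ℕ → ℕ => x i) ⁻¹' s = ⋃ c ∈ s, {x : ℕ → ℕ | ∀ j ∈ ({i} : Finset ℕ), x j = c} := by
      ext x
      simp
    rw [this]
    exact MeasurableSet.biUnion (Set.to_countable s)
      (fun c _ => MeasurableSpace.measurableSet_generateFrom ⟨{i}, fun _ => c, rfl⟩)
  · apply MeasurableSpace.generateFrom_le
    rintro A ⟨I, c, rfl⟩
    have : {x : ℕ → ℕ | ∀ i ∈ I, x i = c i} = ⋂ i ∈ I, (fun x : ℕ → ℕ => x i) ⁻¹' {c i} := by
      ext x; simp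
    rw [this]
    exact MeasurableSet.biInter (I : Set ℕ).to_countable
      (fun i _ => measurable_pi_apply i (MeasurableSet.of_discrete (s := {c i})))

section SectB

variable {Ω : Type*} [MeasurableSpace Ω] {μ : Measure Ω} [IsProbabilityMeasure μ]
  {ξ : ℕ → Ω → ℕ}

lemma meas_iInter_singleton (hmeas : ∀ i, Measurable (ξ i))
    (hindep : iIndepFun ξ μ)
    (hident : ∀ i, Measure.map (ξ i) μ = Measure.map (ξ 0) μ)
    (m : ℕ) (I : Finset ℕ) (c : ℕ → ℕ) :
    μ (⋂ i ∈ I, ξ (m + i) ⁻¹' {c i}) = ∏ i ∈ I, (Measure.map (ξ 0) μ) {c i} := by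
  have hsingle : ∀ j a, μ (ξ j ⁻¹' {a}) = (Measure.map (ξ 0) μ) ({a} : Set ℕ) := by
    intro j a
    rw [← hident j, Measure.map_apply (hmeas j) (MeasurableSet.of_discrete (s := {a}))]
  have hset : (⋂ i ∈ I, ξ (m + i) ⁻¹' {c i})
      = ⋂ j ∈ I.image (fun i => m + i), ξ j ⁻¹' {c (j - m)} := by
    ext ω
    simp only [Set.mem_iInter, Finset.mem_image, Set.mem_preimage, Set.mem_singleton_iff]
    constructor
    · rintro h j ⟨i, hi, rfl⟩
      simpa using h i hi
    · intro h i hi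
      have := h (m + i) ⟨i, hi, rfl⟩
      simpa using this
  rw [hset,
    hindep.measure_inter_preimage_eq_mul (I.image (fun i => m + i))
      (sets := fun j => {c (j - m)}) (fun _ _ => MeasurableSet.of_discrete),
    Finset.prod_image (fun i _ j _ h => by omega)]
  apply Finset.prod_congr rfl
  intro i _
  have hmi : m + i - m = i := by omega
  rw [hmi, hsingle]

lemma shift_law (hmeas : ∀ i, Measurable (ξ i))
    (hindep : iIndepFun ξ μ)
    (hident : ∀ i, Measure.map (ξ i) μ = Measure.map (ξ 0) μ) (m : ℕ) :
    Measure.map (fun ω k => ξ (m + k) ω) μ = Measure.map (fun ω k => ξ k ω) μ := by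
  have hW : ∀ m', Measurable (fun ω k => ξ (m' + k) ω) :=
    fun m' => measurable_pi_lambda _ (fun k => hmeas (m' + k))
  haveI h1 : IsProbabilityMeasure (Measure.map (fun ω k => ξ (m + k) ω) μ) :=
    Measure.isProbabilityMeasure_map (hW m).aemeasurable
  haveI h2 : IsProbabilityMeasure (Measure.map (fun ω k => ξ k ω) μ) :=
    Measure.isProbabilityMeasure_map (measurable_pi_lambda _ hmeas).aemeasurable
  apply ext_of_generate_finite cylSet generateFrom_cylSet isPiSystem_cylSet
  · rintro A ⟨I, c, rfl⟩
    have hpre : ∀ m', (fun ω k => ξ (m' + k) ω) ⁻¹' {x | ∀ i ∈ I, x i = c i}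
        = ⋂ i ∈ I, ξ (m' + i) ⁻¹' {c i} := by
      intro m'
      ext ω
      simp [Set.mem_iInter]
    have hA : MeasurableSet {x : ℕ → ℕ | ∀ i ∈ I, x i = c i} := by
      have hiA : {x : ℕ → ℕ | ∀ i ∈ I, x i = c i}
          = ⋂ i ∈ I, (fun x : ℕ → ℕ => x i) ⁻¹' {c i} := by
        ext x; simp
      rw [hiA]
      exact MeasurableSet.biInter (I : Set ℕ).to_countable
        (fun i _ => measurable_pi_apply i (MeasurableSet.of_discrete (s := {c i})))
    rw [Measure.map_apply (hW m) hA, Measure.map_apply (measurable_pi_lambda _ hmeas) hA]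
    have h0 : (fun ω k => ξ k ω) = (fun ω k => ξ (0 + k) ω) := by
      funext ω k; rw [zero_add]
    rw [hpre m, h0, hpre 0, meas_iInter_singleton hmeas hindep hident,
      meas_iInter_singleton hmeas hindep hident]
  · simp

lemma measurable_pi_lambda' {Ω : Type*} [M : MeasurableSpace Ω] (f : Ω → ℕ → ℕ)
    (hf : ∀ k, Measurable fun ω => f ω k) : Measurable f := measurable_pi_lambda f hf

lemma block_indep (hmeas : ∀ i, Measurable (ξ i))
    (hindep : iIndepFun ξ μ) (m : ℕ)
    {D : Set Ω}
    (hD : MeasurableSet[⨆ i ∈ Set.Iio m, MeasurableSpace.comap (ξ i) inferInstance] D)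
    {T : Set (ℕ → ℕ)} (hT : MeasurableSet T) :
    μ (D ∩ (fun ω k => ξ (m + k) ω) ⁻¹' T)
      = μ D * μ ((fun ω k => ξ (m + k) ω) ⁻¹' T) := by
  have hblock := indep_biSup_compl (fun i => (hmeas i).comap_le) hindep (Set.Iio m)
  rw [Indep_iff] at hblock
  apply hblock _ _ hD
  have hWm : Measurable[⨆ i ∈ (Set.Iio m)ᶜ, MeasurableSpace.comap (ξ i) inferInstance]
      (fun ω k => ξ (m + k) ω) := by
    apply measurable_pi_lambda'
      (M := ⨆ i ∈ (Set.Iio m)ᶜ, MeasurableSpace.comap (ξ i) inferInstance)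
    intro k
    have h1 : Measurable[MeasurableSpace.comap (ξ (m + k)) inferInstance] (ξ (m + k)) :=
      Measurable.of_comap_le le_rfl
    exact h1.mono
      (le_biSup (fun i => MeasurableSpace.comap (ξ i) inferInstance)
        (show m + k ∈ (Set.Iio m)ᶜ by simp)) le_rfl
  exact hWm hT

lemma D_measurable (hmeas : ∀ i, Measurable (ξ i)) (hpos : ∀ i ω, 1 ≤ ξ i ω)
    (n : ℕ) (hn : 1 ≤ n) (m r : ℕ) :
    MeasurableSet[⨆ i ∈ Set.Iio m, MeasurableSpace.comap (ξ i) inferInstance]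
      {ω | FPT ξ n ω = m ∧ n - Swalk ξ (m - 1) ω = r} := by
  set M := ⨆ i ∈ Set.Iio m, MeasurableSpace.comap (ξ i) inferInstance with hM
  have hξ' : ∀ i < m, Measurable[M] (ξ i) := by
    intro i hi
    exact (Measurable.of_comap_le le_rfl).mono
      (le_biSup (fun i => MeasurableSpace.comap (ξ i) inferInstance)
        (Set.mem_Iio.mpr hi)) le_rfl
  have hS' : ∀ k, k ≤ m → Measurable[M] (Swalk ξ k) := by
    intro k hk
    apply Finset.measurable_sum
    intro i hi
    exact hξ' i (lt_of_lt_of_le (Finset.mem_range.mp hi) hk)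
  have hset : {ω | FPT ξ n ω = m ∧ n - Swalk ξ (m - 1) ω = r}
      = (({ω | 1 ≤ m} ∩ Swalk ξ m ⁻¹' Set.Ici n) ∩
          ⋂ k ∈ Set.Iio m, Swalk ξ k ⁻¹' Set.Iio n) ∩
        (fun ω => n - Swalk ξ (m - 1) ω) ⁻¹' {r} := by
    ext ω
    simp only [Set.mem_setOf_eq, Set.mem_inter_iff, Set.mem_preimage, Set.mem_Ici,
      Set.mem_Iio, Set.mem_iInter, Set.mem_singleton_iff, fpt_eq_iff ξ n hpos hn ω m]
    tauto
  rw [hset]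
  refine MeasurableSet.inter (MeasurableSet.inter (MeasurableSet.inter ?_ ?_) ?_) ?_
  · exact MeasurableSet.const _
  · exact hS' m le_rfl MeasurableSet.of_discrete
  · exact MeasurableSet.biInter (Set.to_countable _)
      (fun k hk => hS' k (le_of_lt hk) MeasurableSet.of_discrete)
  · exact (Measurable.const_sub (hS' (m - 1) (by omega)) n) MeasurableSet.of_discrete


end SectB

/-- Coupling decomposition: pathwise `M_n = N_n - 1 + M̂`, where `M̂` counts the
jumps of the analogously truncated process built from the shifted increments
`(ξ_{N_n+k})_k` at level `n - S_{N_n-1}`; moreover `M_n - N_n + 1` equals in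
distribution `M'_{n - S_{N_n-1}}`, with `(M'_k)` an independent copy of `(M_k)`,
independent of `(N_n, n - S_{N_n-1})` (realized on the product space). -/
theorem coupling_decomposition {Ω : Type*} [MeasurableSpace Ω] (μ : Measure Ω)
    [IsProbabilityMeasure μ] (ξ : ℕ → Ω → ℕ)
    (hmeas : ∀ i, Measurable (ξ i)) (hpos : ∀ i ω, 1 ≤ ξ i ω)
    (hindep : iIndepFun ξ μ)
    (hident : ∀ i, Measure.map (ξ i) μ = Measure.map (ξ 0) μ)
    (n : ℕ) (hn : 1 ≤ n) :
    (∀ ω, jumps (fun k => ξ k ω) n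
        = FPT ξ n ω - 1 +
          jumps (fun k => ξ (FPT ξ n ω + k) ω) (n - Swalk ξ (FPT ξ n ω - 1) ω)) ∧
    Measure.map (fun ω => jumps (fun k => ξ k ω) n + 1 - FPT ξ n ω) μ
      = Measure.map (fun q : Ω × Ω =>
          jumps (fun k => ξ k q.2) (n - Swalk ξ (FPT ξ n q.1 - 1) q.1)) (μ.prod μ) := by
  have hseq : Measurable (fun ω : Ω => fun k => ξ k ω) := measurable_pi_lambda _ hmeas
  have hW : ∀ m, Measurable (fun ω : Ω => fun k => ξ (m + k) ω) :=
    fun m => measurable_pi_lambda _ (fun k => hmeas (m + k))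
  -- Part 1: the pathwise identity.
  have part1 : ∀ ω, jumps (fun k => ξ k ω) n
      = FPT ξ n ω - 1 +
        jumps (fun k => ξ (FPT ξ n ω + k) ω) (n - Swalk ξ (FPT ξ n ω - 1) ω) := by
    intro ω
    obtain ⟨h1, h2⟩ := fpt_mem ξ n hpos hn ω
    have hlt : ∀ k < FPT ξ n ω, Swalk ξ k ω < n :=
      ((fpt_eq_iff ξ n hpos hn ω (FPT ξ n ω)).mp rfl).2.2
    exact jumps_decomp (fun k => ξ k ω) (fun k => hpos k ω) n (FPT ξ n ω) h1 hlt h2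
  refine ⟨part1, ?_⟩
  -- Part 2: the distributional identity.
  have hFPTmeas : Measurable (FPT ξ n) := measurable_FPT ξ n hmeas hpos hn
  have hgmeas : Measurable (fun ω => n - Swalk ξ (FPT ξ n ω - 1) ω) := by
    apply measurable_to_countable'
    intro r
    have hsetg : ((fun ω => n - Swalk ξ (FPT ξ n ω - 1) ω) ⁻¹' {r})
        = ⋃ m, (FPT ξ n ⁻¹' {m}) ∩ ((fun ω => n - Swalk ξ (m - 1) ω) ⁻¹' {r}) := by
      ext ω
      simp only [Set.mem_preimage, Set.mem_singleton_iff, Set.mem_iUnion, Set.mem_inter_iff]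
      constructor
      · intro h; exact ⟨FPT ξ n ω, rfl, h⟩
      · rintro ⟨m, rfl, h⟩; exact h
    rw [hsetg]
    exact MeasurableSet.iUnion fun m =>
      (hFPTmeas MeasurableSet.of_discrete).inter
        ((Measurable.const_sub (measurable_Swalk ξ hmeas (m - 1)) n) MeasurableSet.of_discrete)
  have hF1 : Measurable (fun ω => jumps (fun k => ξ k ω) n + 1 - FPT ξ n ω) :=
    (((measurable_jumps n).comp hseq).add_const 1).sub hFPTmeas
  have hjj : Measurable (fun p : ℕ × (ℕ → ℕ) => jumps p.2 p.1) := by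
    apply measurable_to_countable'
    intro j
    have hsetj : ((fun p : ℕ × (ℕ → ℕ) => jumps p.2 p.1) ⁻¹' {j})
        = ⋃ r, ({r} : Set ℕ) ×ˢ {x | jumps x r = j} := by
      ext ⟨r, x⟩
      simp [eq_comm]
    rw [hsetj]
    exact MeasurableSet.iUnion fun r =>
      MeasurableSet.prod MeasurableSet.of_discrete
        ((measurable_jumps r) (MeasurableSet.of_discrete (s := ({j} : Set ℕ))))
  have hG : Measurable (fun q : Ω × Ω =>
      jumps (fun k => ξ k q.2) (n - Swalk ξ (FPT ξ n q.1 - 1) q.1)) :=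
    hjj.comp ((hgmeas.comp measurable_fst).prodMk (hseq.comp measurable_snd))
  set D : ℕ × ℕ → Set Ω :=
    fun p => {ω | FPT ξ n ω = p.1 ∧ n - Swalk ξ (p.1 - 1) ω = p.2} with hD_def
  have hDmeas : ∀ p, MeasurableSet (D p) := by
    intro p
    have hshow : D p = (FPT ξ n ⁻¹' {p.1}) ∩ ((fun ω => n - Swalk ξ (p.1 - 1) ω) ⁻¹' {p.2}) :=
      rfl
    rw [hshow]
    exact (hFPTmeas MeasurableSet.of_discrete).inter
      ((Measurable.const_sub (measurable_Swalk ξ hmeas (p.1 - 1)) n) MeasurableSet.of_discrete)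
  have hDdet : ∀ (ω : Ω) p, ω ∈ D p → p = (FPT ξ n ω, n - Swalk ξ (FPT ξ n ω - 1) ω) := by
    rintro ω ⟨m, r⟩ ⟨h1, h2⟩
    simp only at h1 h2
    subst h1
    rw [← h2]
  apply Measure.ext
  intro s hs
  rw [Measure.map_apply hF1 hs, Measure.map_apply hG hs]
  have hpre1 : ((fun ω => jumps (fun k => ξ k ω) n + 1 - FPT ξ n ω) ⁻¹' s)
      = ⋃ p : ℕ × ℕ, (D p ∩ {ω | jumps (fun k => ξ (p.1 + k) ω) p.2 ∈ s}) := by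
    ext ω
    have hdec := part1 ω
    obtain ⟨h1, _⟩ := fpt_mem ξ n hpos hn ω
    have heq : jumps (fun k => ξ k ω) n + 1 - FPT ξ n ω
        = jumps (fun k => ξ (FPT ξ n ω + k) ω) (n - Swalk ξ (FPT ξ n ω - 1) ω) := by
      omega
    simp only [Set.mem_preimage, Set.mem_iUnion, Set.mem_inter_iff, Set.mem_setOf_eq, hD_def]
    constructor
    · intro hω
      refine ⟨(FPT ξ n ω, n - Swalk ξ (FPT ξ n ω - 1) ω), ⟨rfl, rfl⟩, ?_⟩
      rwa [heq] at hω
    · rintro ⟨⟨m, r⟩, ⟨hm, hr⟩, hmem⟩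
      simp only at hm hr hmem
      subst hm
      subst hr
      rwa [heq]
  have hpre2 : ((fun q : Ω × Ω =>
        jumps (fun k => ξ k q.2) (n - Swalk ξ (FPT ξ n q.1 - 1) q.1)) ⁻¹' s)
      = ⋃ p : ℕ × ℕ, (D p ×ˢ {ω : Ω | jumps (fun k => ξ k ω) p.2 ∈ s}) := by
    ext ⟨a, b⟩
    simp only [Set.mem_preimage, Set.mem_iUnion, Set.mem_prod, Set.mem_setOf_eq, hD_def]
    constructor
    · intro h
      exact ⟨(FPT ξ n a, n - Swalk ξ (FPT ξ n a - 1) a), ⟨rfl, rfl⟩, h⟩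
    · rintro ⟨⟨m, r⟩, ⟨hm, hr⟩, h⟩
      simp only at hm hr h
      subst hm
      subst hr
      exact h
  have hdisj1 : Pairwise (Function.onFun Disjoint
      (fun p : ℕ × ℕ => D p ∩ {ω | jumps (fun k => ξ (p.1 + k) ω) p.2 ∈ s})) := by
    intro p q hpq
    rw [Function.onFun]
    apply Set.disjoint_left.mpr
    rintro ω ⟨hp, _⟩ ⟨hq, _⟩
    exact hpq ((hDdet ω p hp).trans (hDdet ω q hq).symm)
  have hdisj2 : Pairwise (Function.onFun Disjoint
      (fun p : ℕ × ℕ => D p ×ˢ {ω : Ω | jumps (fun k => ξ k ω) p.2 ∈ s})) := by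
    intro p q hpq
    rw [Function.onFun]
    apply Set.disjoint_left.mpr
    rintro ⟨a, b⟩ ⟨hp, _⟩ ⟨hq, _⟩
    exact hpq ((hDdet a p hp).trans (hDdet a q hq).symm)
  rw [hpre1, hpre2,
    measure_iUnion hdisj1 (fun p =>
      (hDmeas p).inter ((hW p.1) ((measurable_jumps p.2) hs))),
    measure_iUnion hdisj2 (fun p =>
      (hDmeas p).prod (hseq ((measurable_jumps p.2) hs)))]
  apply tsum_congr
  rintro ⟨m, r⟩
  rw [Measure.prod_prod]
  have hTm : MeasurableSet {x : ℕ → ℕ | jumps x r ∈ s} := (measurable_jumps r) hs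
  show μ ({ω | FPT ξ n ω = m ∧ n - Swalk ξ (m - 1) ω = r}
        ∩ (fun ω k => ξ (m + k) ω) ⁻¹' {x | jumps x r ∈ s})
      = μ {ω | FPT ξ n ω = m ∧ n - Swalk ξ (m - 1) ω = r}
        * μ ((fun ω k => ξ k ω) ⁻¹' {x | jumps x r ∈ s})
  rw [block_indep hmeas hindep m (D_measurable hmeas hpos n hn m r) hTm,
    ← Measure.map_apply (hW m) hTm, shift_law hmeas hindep hident m,
    Measure.map_apply hseq hTm]
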